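/- Let τ = ⌊(n−k)/2⌋ and N_t = n−τ−t(k−1) for t = 0,1. Suppose Q^(0), Q^(1) ∈ F[x] with deg Q^(t) < N_t and B ∈ F[x] with deg B < n−k−τ satisfy Q^(0)(x) + Q^(1)(x)·R(x) = B(x)·G(x). Let Λ^(1)(x) = x^{N_1−1}·Q^(1)(1/x), Ω(x) = x^{n−k−τ−1}·B(1/x), and let S(x) ∈ F[[x]] be the formal power series R̄(x)/Ḡ(x), where R̄(x) = x^{n−1}·R(1/x) and Ḡ(x) = ∏_{i=1}^n (1−α_i x) (which has Ḡ(0) = 1 and is hence invertible in F[[x]]). Then the Key Equation S(x)·Λ^(1)(x) ≡ Ω(x) (mod x^{n−k}) holds, i.e., the coefficients of x^0,…,x^{n−k−1} of S(x)·Λ^(1)(x) − Ω(x) all vanish. -/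

import Mathlib

open Polynomial

/-- The classical Key Equation `S(x)·Λ¹(x) ≡ Ω(x) (mod x^{n−k})`, where
`S = R̄/Ḡ` is the syndrome power series, `Λ¹ = x^{N₁−1}·Q¹(1/x)` and
`Ω = x^{n−k−τ−1}·B(1/x)`: the coefficients of `x^0,…,x^{n−k−1}` of
`S·Λ¹ − Ω` all vanish. -/
theorem key_equation_from_welch_berlekamp
    (F : Type*) [Field F] (n k : ℕ) (hk : 1 ≤ k) (hkn : k ≤ n)
    (α υ' : Fin n → F) (hα : Function.Injective α) (hα0 : ∀ i, α i ≠ 0)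
    (hυ' : ∀ i, υ' i ≠ 0)
    (τ : ℕ) (hτ : τ = (n - k) / 2)
    (r : Fin n → F)
    (G : F[X]) (hG : G = ∏ i, (X - C (α i)))
    (R : F[X]) (hRdeg : R.degree < (n : ℕ))
    (hR : ∀ i, R.eval (α i) = r i / υ' i)
    (Q0 Q1 B : F[X])
    (hd0 : Q0.degree < ((n - τ : ℕ) : WithBot ℕ))
    (hd1 : Q1.degree < ((n - τ - (k - 1) : ℕ) : WithBot ℕ))
    (hdB : B.degree < ((n - k - τ : ℕ) : WithBot ℕ))
    (heq : Q0 + Q1 * R = B * G) :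
    ∀ i < n - k,
      PowerSeries.coeff i
        ((R.reflect (n - 1) : PowerSeries F) * (G.reflect n : PowerSeries F)⁻¹ *
            (Q1.reflect (n - τ - (k - 1) - 1) : PowerSeries F) -
          (B.reflect (n - k - τ - 1) : PowerSeries F)) = 0 := by
  intro i hi
  have hkn' : k < n := by omega
  have hτlt : τ < n - k := by omega
  -- natDegree bounds
  have natDeg_bound : ∀ (p : F[X]) (m : ℕ), 1 ≤ m → p.degree < (m : WithBot ℕ) →
      p.natDegree ≤ m - 1 := by
    intro p m hm hpm
    rcases eq_or_ne p 0 with h | h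
    · simp [h]
    · have := (Polynomial.natDegree_lt_iff_degree_lt h).mpr hpm
      omega
  have hRn : R.natDegree ≤ n - 1 := natDeg_bound R n (by omega) hRdeg
  have hQ0n : Q0.natDegree ≤ n - τ - 1 := by
    have := natDeg_bound Q0 (n - τ) (by omega) hd0; omega
  have hQ1n : Q1.natDegree ≤ n - τ - (k - 1) - 1 :=
    natDeg_bound Q1 (n - τ - (k - 1)) (by omega) hd1
  have hBn : B.natDegree ≤ n - k - τ - 1 := natDeg_bound B (n - k - τ) (by omega) hdB
  -- G is monic of degree n
  have hGmonic : G.Monic := by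
    rw [hG]; exact monic_prod_of_monic _ _ fun j _ => monic_X_sub_C (α j)
  have hGdeg : G.natDegree = n := by
    rw [hG, natDegree_prod_of_monic _ _ fun j _ => monic_X_sub_C (α j)]
    simp
  -- reflected polynomial identity
  have hM1 : n - τ - (k - 1) - 1 + (n - 1) = n - τ - 1 + (n - k) := by omega
  have hM2 : n - τ - (k - 1) - 1 + (n - 1) = n - k - τ - 1 + n := by omega
  have key : Q0.reflect (n - τ - 1) * X ^ (n - k) +
      Q1.reflect (n - τ - (k - 1) - 1) * R.reflect (n - 1) =
      B.reflect (n - k - τ - 1) * G.reflect n := by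
    have e1 : (Q1 * R).reflect (n - τ - (k - 1) - 1 + (n - 1)) =
        Q1.reflect (n - τ - (k - 1) - 1) * R.reflect (n - 1) :=
      reflect_mul Q1 R hQ1n hRn
    have e2 : (B * G).reflect (n - k - τ - 1 + n) =
        B.reflect (n - k - τ - 1) * G.reflect n :=
      reflect_mul B G hBn hGdeg.le
    have e0 : Q0.reflect (n - τ - 1 + (n - k)) =
        Q0.reflect (n - τ - 1) * X ^ (n - k) := by
      have := reflect_mul Q0 (1 : F[X]) hQ0n
        (by simp : (1 : F[X]).natDegree ≤ n - k)
      simpa [reflect_one] using this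
    have := congrArg (fun p : F[X] => p.reflect (n - τ - (k - 1) - 1 + (n - 1))) heq
    simp only [reflect_add] at this
    rw [e1, hM2, e2, ← hM2, hM1, e0] at this
    exact this
  -- move to power series
  have keyPS : (Q0.reflect (n - τ - 1) : PowerSeries F) * (PowerSeries.X) ^ (n - k) +
      (Q1.reflect (n - τ - (k - 1) - 1) : PowerSeries F) * (R.reflect (n - 1) : PowerSeries F) =
      (B.reflect (n - k - τ - 1) : PowerSeries F) * (G.reflect n : PowerSeries F) := by
    have := congrArg (fun p : F[X] => (p : PowerSeries F)) key
    simpa [Polynomial.coe_add, Polynomial.coe_mul, Polynomial.coe_pow] using this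
  -- invertibility of Ḡ
  have hG0 : PowerSeries.constantCoeff (G.reflect n : PowerSeries F) ≠ 0 := by
    have : (G.reflect n).coeff 0 = 1 := by
      rw [coeff_reflect]
      simpa [hGdeg] using hGmonic.coeff_natDegree
    rw [← PowerSeries.coeff_zero_eq_constantCoeff_apply, Polynomial.coeff_coe, this]
    exact one_ne_zero
  have hinv : (G.reflect n : PowerSeries F) * (G.reflect n : PowerSeries F)⁻¹ = 1 :=
    PowerSeries.mul_inv_cancel _ hG0
  -- main identity
  have main : (R.reflect (n - 1) : PowerSeries F) * (G.reflect n : PowerSeries F)⁻¹ *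
      (Q1.reflect (n - τ - (k - 1) - 1) : PowerSeries F) -
      (B.reflect (n - k - τ - 1) : PowerSeries F) =
      -((Q0.reflect (n - τ - 1) : PowerSeries F) * (G.reflect n : PowerSeries F)⁻¹ *
        (PowerSeries.X) ^ (n - k)) := by
    linear_combination (G.reflect n : PowerSeries F)⁻¹ * keyPS +
      (B.reflect (n - k - τ - 1) : PowerSeries F) * hinv
  rw [main, map_neg, neg_eq_zero]
  exact PowerSeries.X_pow_dvd_iff.mp (dvd_mul_left _ _) i hi
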